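/- Fix σ², G, K, η, p, p_b, W, λ > 0 and set A := G²ηp/σ² and X := Gη(pG + p_b·K)/σ². Let z† be the unique z > 1 with z·ln z − z + 1 = A, let E^lim := p_b(z†−1)/(z†−1+X), and define β(E) := −(λW/p_b)·log₂(1 + X·E/(p_b − E)) + λW·X/((p_b − E + X·E)·ln 2). Then β(E^lim) = λW·G·η·K/(z†·σ²·ln 2), i.e. the gradient of the piecewise function S(E) is continuous at E^lim, where its value on [0, E^lim] is the constant α := λW·G·η·K/(z†·σ²·ln 2). -/

import Mathlib

/-- β(E^lim) = α = λW·GηK/(z†σ² ln 2): the gradient of the piecewise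
function S(E) is continuous at E^lim. -/
theorem stmt_8 (σ2 G K η p pb W lam : ℝ)
    (hσ2 : 0 < σ2) (hG : 0 < G) (hK : 0 < K) (hη : 0 < η)
    (hp : 0 < p) (hpb : 0 < pb) (hW : 0 < W) (hlam : 0 < lam)
    (A X : ℝ)
    (hA : A = G ^ 2 * η * p / σ2)
    (hX : X = G * η * (p * G + pb * K) / σ2)
    (zdag : ℝ) (hz1 : 1 < zdag)
    (hz : zdag * Real.log zdag - zdag + 1 = A)
    (Elim : ℝ) (hElim : Elim = pb * (zdag - 1) / (zdag - 1 + X))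
    (β : ℝ → ℝ)
    (hβ : ∀ E : ℝ, β E = -(lam * W / pb) * Real.logb 2 (1 + X * E / (pb - E))
        + lam * W * X / ((pb - E + X * E) * Real.log 2))
    (α : ℝ) (hα : α = lam * W * G * η * K / (zdag * σ2 * Real.log 2)) :
    β Elim = α := by
  have hX0 : 0 < X := by rw [hX]; positivity
  have hD : 0 < zdag - 1 + X := by linarith
  have hz0 : (0:ℝ) < zdag := by linarith
  have hpbE : pb - Elim = pb * X / (zdag - 1 + X) := by
    rw [hElim]; field_simp; ring
  have hpbE0 : pb - Elim ≠ 0 := by rw [hpbE]; positivity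
  have h1 : 1 + X * Elim / (pb - Elim) = zdag := by
    rw [hpbE, hElim]; field_simp; ring
  have hsum : pb - Elim + X * Elim = pb * X * zdag / (zdag - 1 + X) := by
    rw [hpbE, hElim]; field_simp; ring
  have hlog2 : (0:ℝ) < Real.log 2 := Real.log_pos (by norm_num)
  have hlogz : Real.log zdag = (A + zdag - 1) / zdag := by
    field_simp; linarith [hz]
  have hXA : X - A = G * η * pb * K / σ2 := by
    rw [hX, hA]; field_simp; ring
  have hXA' : X * σ2 = A * σ2 + G * η * pb * K := by
    have := hXA
    field_simp at this
    linarith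
  rw [hβ, h1, hsum, hα, Real.logb, hlogz]
  field_simp
  linear_combination hXA'
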